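/- If Q₂ = (V₂, S₂, D₂, p₂) is an equilibrium of the system with V₂ > 0 and S₂ > 0 and 0 < p₂, 0 < Ω₂ (interior equilibrium), then necessarily α(1-ω) = β; moreover D₂ > 0 forces β > γ, and then D₂ = βω V₂/((β-γ)(1-ω)). -/

import Mathlib

theorem stmt8 (α β γ κ ε εp ω : ℝ)
    (hα : 0 < α) (hβ : 0 < β) (hγ : 0 < γ) (hκ : 0 < κ) (hε : 0 < ε) (hεp : 0 < εp)
    (hω0 : 0 < ω) (hω1 : ω < 1)
    (V₂ S₂ D₂ p₂ : ℝ) (hV₂ : 0 < V₂) (hS₂ : 0 < S₂) (hD₂ : 0 < D₂)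
    (hp₂ : 0 < p₂) (hΩ : 0 < 1 - V₂ - S₂ - D₂)
    (heqV : α * (1 - ω) * V₂ * p₂ * (1 - V₂ - S₂ - D₂) - ε * V₂ = 0)
    (heqS : β * S₂ * p₂ * (1 - V₂ - S₂ - D₂) - ε * S₂ = 0)
    (heqD : (ω * α * V₂ + γ * D₂) * p₂ * (1 - V₂ - S₂ - D₂) - ε * D₂ = 0)
    (heqp : κ * V₂ * (1 - p₂) - εp * p₂ = 0) :
    α * (1 - ω) = β ∧ γ < β ∧ D₂ = β * ω * V₂ / ((β - γ) * (1 - ω)) := by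
  set Ω := 1 - V₂ - S₂ - D₂ with hΩdef
  have hx : 0 < p₂ * Ω := mul_pos hp₂ hΩ
  have h1 : β * (p₂ * Ω) = ε :=
    mul_right_cancel₀ hS₂.ne' (by linear_combination heqS)
  have h2 : α * (1 - ω) * (p₂ * Ω) = ε :=
    mul_right_cancel₀ hV₂.ne' (by linear_combination heqV)
  have hab : α * (1 - ω) = β :=
    mul_right_cancel₀ hx.ne' (by rw [h1, h2])
  have hD : ω * α * V₂ = (β - γ) * D₂ :=
    mul_right_cancel₀ hx.ne' (by linear_combination heqD - D₂ * h1)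
  have hβγ : γ < β := by nlinarith [mul_pos (mul_pos hω0 hα) hV₂]
  refine ⟨hab, hβγ, ?_⟩
  have hden : (β - γ) * (1 - ω) ≠ 0 :=
    (mul_pos (sub_pos.2 hβγ) (sub_pos.2 hω1)).ne'
  rw [eq_div_iff hden]
  linear_combination ω * V₂ * hab - (1 - ω) * hD
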